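/- Let μ ∈ ℂ be such that A* − μ maps D(A*) bijectively onto H with bounded inverse, and set γ = |Im μ| · ‖(A* − μ)^{-1}‖. Then for every u ∈ D(A): ‖Γ_*(A* − μ)^{-1}(A − μ)u‖_{E_*} ≤ (1 + 16√(γ(1+γ))) ‖Γu‖_E. -/

import Mathlib

open scoped ComplexInnerProductSpace

noncomputable section

/-- A maximal dissipative operator on a complex Hilbert space `H`, together with the
(derivable) data of its resolvent on the open lower half-plane and the resolvent of its
adjoint on the open upper half-plane.  Here the inner product `⟪·,·⟫` is conjugate-linear
in the first variable, so that the paper's `⟨x, y⟩` corresponds to `⟪y, x⟫`. -/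
structure MDO (H : Type*) [NormedAddCommGroup H] [InnerProductSpace ℂ H]
    [CompleteSpace H] where
  /-- The underlying densely defined operator. -/
  A : H →ₗ.[ℂ] H
  dense_dom : Dense (A.domain : Set H)
  dissipative : ∀ u : A.domain, 0 ≤ (⟪(u : H), A u⟫).im
  /-- `R z` is the bounded inverse `(A - z)⁻¹`, for `Im z < 0`. -/
  R : ℂ → H →L[ℂ] H
  R_mem : ∀ z, z.im < 0 → ∀ h : H, R z h ∈ A.domain
  R_right : ∀ z (hz : z.im < 0) (h : H), A ⟨R z h, R_mem z hz h⟩ - z • R z h = h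
  R_left : ∀ z, z.im < 0 → ∀ u : A.domain, R z (A u - z • (u : H)) = (u : H)
  dense_dom_star : Dense (A.adjoint.domain : Set H)
  anti_dissipative_star : ∀ u : A.adjoint.domain, (⟪(u : H), A.adjoint u⟫).im ≤ 0
  /-- `Rs z` is the bounded inverse `(A* - z)⁻¹`, for `Im z > 0`. -/
  Rs : ℂ → H →L[ℂ] H
  Rs_mem : ∀ z, 0 < z.im → ∀ h : H, Rs z h ∈ A.adjoint.domain
  Rs_right : ∀ z (hz : 0 < z.im) (h : H),
    A.adjoint ⟨Rs z h, Rs_mem z hz h⟩ - z • Rs z h = h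
  Rs_left : ∀ z, 0 < z.im → ∀ u : A.adjoint.domain,
    Rs z (A.adjoint u - z • (u : H)) = (u : H)

/-- A maximal dissipative operator together with boundary operators `Γ`, `Γ_*` satisfying
the abstract Lagrange identities, and the bounded compositions `ΓR z = Γ ∘ (A - z)⁻¹`
(for `Im z < 0`) and `ΓsRs z = Γ_* ∘ (A* - z)⁻¹` (for `Im z > 0`). -/
structure StrausSetting (H E Es : Type*)
    [NormedAddCommGroup H] [InnerProductSpace ℂ H] [CompleteSpace H]
    [NormedAddCommGroup E] [InnerProductSpace ℂ E] [CompleteSpace E]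
    [NormedAddCommGroup Es] [InnerProductSpace ℂ Es] [CompleteSpace Es]
    extends MDO H where
  Γ : A.domain →ₗ[ℂ] E
  Γ_bdd : ∃ C : ℝ, ∀ u : A.domain, ‖Γ u‖ ≤ C * (‖(u : H)‖ + ‖A u‖)
  Γ_dense : DenseRange Γ
  lagrange : ∀ u v : A.domain,
    ⟪(v : H), A u⟫ - ⟪A v, (u : H)⟫ = Complex.I * ⟪Γ v, Γ u⟫
  Γs : A.adjoint.domain →ₗ[ℂ] Es
  Γs_bdd : ∃ C : ℝ, ∀ u : A.adjoint.domain,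
    ‖Γs u‖ ≤ C * (‖(u : H)‖ + ‖A.adjoint u‖)
  Γs_dense : DenseRange Γs
  lagrange_star : ∀ u v : A.adjoint.domain,
    ⟪(v : H), A.adjoint u⟫ - ⟪A.adjoint v, (u : H)⟫ = -Complex.I * ⟪Γs v, Γs u⟫
  /-- `ΓR z = Γ ∘ (A - z)⁻¹` as a bounded operator `H →L[ℂ] E`, for `Im z < 0`. -/
  ΓR : ℂ → H →L[ℂ] E
  ΓR_spec : ∀ z (hz : z.im < 0) (h : H), ΓR z h = Γ ⟨R z h, R_mem z hz h⟩
  /-- `ΓsRs z = Γ_* ∘ (A* - z)⁻¹` as a bounded operator `H →L[ℂ] Es`, for `Im z > 0`. -/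
  ΓsRs : ℂ → H →L[ℂ] Es
  ΓsRs_spec : ∀ z (hz : 0 < z.im) (h : H), ΓsRs z h = Γs ⟨Rs z h, Rs_mem z hz h⟩

lemma straus_key {H E Es : Type*}
    [NormedAddCommGroup H] [InnerProductSpace ℂ H] [CompleteSpace H]
    [NormedAddCommGroup E] [InnerProductSpace ℂ E] [CompleteSpace E]
    [NormedAddCommGroup Es] [InnerProductSpace ℂ Es] [CompleteSpace Es]
    (M : StrausSetting H E Es) (lam : ℂ) (u : M.A.domain) (v : M.A.adjoint.domain)
    (hv : (M.A.adjoint v : H) = lam • (v : H) + ((M.A u : H) - lam • (u : H))) :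
    ‖M.Γs v‖ ^ 2 = ‖M.Γ u‖ ^ 2 - 2 * lam.im * ‖(u : H) - (v : H)‖ ^ 2 := by
  have hadj : ⟪(M.A.adjoint v : H), (u : H)⟫ = ⟪(v : H), (M.A u : H)⟫ :=
    LinearPMap.adjoint_isFormalAdjoint M.dense_dom v u
  have h1 := M.lagrange u u
  have h2 := M.lagrange_star v v
  set x : H := (u : H) with hx
  set y : H := (v : H) with hy
  set au : H := (M.A u : H) with hau
  set av : H := (M.A.adjoint v : H) with hav
  have himc : (⟪au, x⟫ : ℂ).im = -(⟪x, au⟫ : ℂ).im := by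
    have := congrArg Complex.im (inner_conj_symm x au)
    simp only [Complex.conj_im] at this
    linarith
  have himc2 : (⟪av, y⟫ : ℂ).im = -(⟪y, av⟫ : ℂ).im := by
    have := congrArg Complex.im (inner_conj_symm y av)
    simp only [Complex.conj_im] at this
    linarith
  have hGu : ‖M.Γ u‖ ^ 2 = 2 * (⟪x, au⟫).im := by
    rw [inner_self_eq_norm_sq_to_K] at h1
    have := congrArg Complex.im h1
    simp [← Complex.ofReal_pow] at this
    linarith [himc]
  have hGs : ‖M.Γs v‖ ^ 2 = -2 * (⟪y, av⟫).im := by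
    rw [inner_self_eq_norm_sq_to_K] at h2
    have := congrArg Complex.im h2
    simp [← Complex.ofReal_pow] at this
    linarith [himc2]
  have h3 : ⟪y, au⟫ = (starRingEnd ℂ) lam * ⟪y, x⟫ + ⟪au, x⟫
      - (starRingEnd ℂ) lam * ⟪x, x⟫ := by
    rw [← hadj, hv, inner_add_left, inner_sub_left, inner_smul_left, inner_smul_left]
    ring
  have hz : ⟪y, av⟫ = lam * ⟪y, y⟫
      + ((starRingEnd ℂ) lam * ⟪y, x⟫ + ⟪au, x⟫ - (starRingEnd ℂ) lam * ⟪x, x⟫)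
      - lam * ⟪y, x⟫ := by
    rw [hv, inner_add_right, inner_sub_right, inner_smul_right, inner_smul_right, h3]
    ring
  have hxx : (⟪x, x⟫ : ℂ).re = ‖x‖ ^ 2 := by
    have := congrArg Complex.re (inner_self_eq_norm_sq_to_K (𝕜 := ℂ) x)
    simpa [← Complex.ofReal_pow] using this
  have hyy : (⟪y, y⟫ : ℂ).re = ‖y‖ ^ 2 := by
    have := congrArg Complex.re (inner_self_eq_norm_sq_to_K (𝕜 := ℂ) y)
    simpa [← Complex.ofReal_pow] using this
  have hxxim : (⟪x, x⟫ : ℂ).im = 0 := by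
    have := congrArg Complex.im (inner_conj_symm x x)
    simp only [Complex.conj_im] at this
    linarith
  have hyyim : (⟪y, y⟫ : ℂ).im = 0 := by
    have := congrArg Complex.im (inner_conj_symm y y)
    simp only [Complex.conj_im] at this
    linarith
  have him := congrArg Complex.im hz
  simp only [Complex.add_im, Complex.sub_im, Complex.mul_im, Complex.conj_re,
    Complex.conj_im] at him
  have hns : ‖x - y‖ ^ 2 = ‖x‖ ^ 2 - 2 * (⟪x, y⟫).re + ‖y‖ ^ 2 := by
    have := @norm_sub_sq ℂ H _ _ _ x y
    simpa using this
  have hre : (⟪y, x⟫).re = (⟪x, y⟫).re := by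
    have := congrArg Complex.re (inner_conj_symm y x)
    simp only [Complex.conj_re] at this
    linarith
  linear_combination hGs - 2 * him - 2 * himc - hGu + 2 * lam.im * hns + 4 * lam.im * hre
    - 2 * lam.im * hxx - 2 * lam.im * hyy - 2 * lam.re * hyyim + 2 * lam.re * hxxim

-- print him

lemma straus_arith (γ g s b P D D₁ Q : ℝ)
    (hγpos : 0 < γ) (hgpos : 0 < g) (hb : b < 0) (hs0 : 0 < s)
    (hg2 : g ^ 2 = γ * (1 + γ)) (hbg : (-b) * g = γ * s)
    (hP0 : 0 ≤ P) (hQ0 : 0 ≤ Q) (hD0 : 0 ≤ D) (hD₁0 : 0 ≤ D₁)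
    (hA : 2 * s * D₁ ^ 2 ≤ P ^ 2)
    (hBD : D ≤ (1 + g + γ) * D₁)
    (hQ2 : Q ^ 2 = P ^ 2 - 2 * b * D ^ 2) :
    Q ≤ (1 + 16 * g) * P := by
  have hγ0 : 0 ≤ γ := le_of_lt hγpos
  have hg0 : 0 ≤ g := le_of_lt hgpos
  have hγg : γ ≤ g := by nlinarith [hg2, hγ0, hg0]
  have hgle : g ≤ 1 + γ := by nlinarith [hg2, hγ0, hg0]
  have hD2 : D ^ 2 ≤ (1 + g + γ) ^ 2 * D₁ ^ 2 := by
    nlinarith [mul_self_le_mul_self hD0 hBD]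
  have hstep : g * (2 * (-b) * D₁ ^ 2) ≤ γ * P ^ 2 := by
    have h' := mul_le_mul_of_nonneg_right hA hγ0
    nlinarith [hbg, sq_nonneg D₁, h']
  have hfac2 : (1 + g + γ) ^ 2 ≤ (2 * (1 + γ)) ^ 2 := by nlinarith [hgle, hγ0, hg0]
  have he : 4 * (1 + γ) * g ^ 2 = 4 * γ * (1 + γ) ^ 2 := by rw [hg2]; ring
  have h1 : γ * (1 + g + γ) ^ 2 ≤ 4 * (1 + γ) * g ^ 2 := by
    nlinarith [mul_le_mul_of_nonneg_left hfac2 hγ0, he]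
  have h2 : 4 * (1 + γ) * g ^ 2 ≤ (32 * g + 256 * g ^ 2) * g := by
    nlinarith [hγg, hg0, sq_nonneg g, hγ0]
  have hineq : γ * (1 + g + γ) ^ 2 ≤ (32 * g + 256 * g ^ 2) * g := h1.trans h2
  have hQ2g : g * Q ^ 2 = g * P ^ 2 + 2 * (-b) * g * D ^ 2 := by rw [hQ2]; ring
  have h2bg : (0 : ℝ) ≤ 2 * (-b) * g := by
    have hb' : 0 < -b := by linarith
    positivity
  have hint1 := mul_le_mul_of_nonneg_left hD2 h2bg
  have hint2 := mul_le_mul_of_nonneg_left hstep (sq_nonneg (1 + g + γ))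
  have hint3 := mul_le_mul_of_nonneg_right hineq (sq_nonneg P)
  have hsqg : g * Q ^ 2 ≤ g * ((1 + 16 * g) * P) ^ 2 := by
    linarith [hQ2g, hint1, hint2, hint3]
  have hsq : Q ^ 2 ≤ ((1 + 16 * g) * P) ^ 2 := le_of_mul_le_mul_left hsqg hgpos
  calc Q = Real.sqrt (Q ^ 2) := (Real.sqrt_sq hQ0).symm
    _ ≤ Real.sqrt (((1 + 16 * g) * P) ^ 2) := Real.sqrt_le_sqrt hsq
    _ = (1 + 16 * g) * P := Real.sqrt_sq (by positivity)


set_option maxHeartbeats 1000000 in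
/-- Norm estimate for the extended characteristic function: if `A* - μ`
has a bounded two-sided inverse `Rmu` and `γ = |Im μ| ‖(A* - μ)⁻¹‖`, then for every
`u ∈ D(A)`, `‖Γ_*(A* - μ)⁻¹(A - μ)u‖ ≤ (1 + 16 √(γ(1+γ))) ‖Γu‖`. -/
theorem stmt8 {H E Es : Type*}
    [NormedAddCommGroup H] [InnerProductSpace ℂ H] [CompleteSpace H]
    [NormedAddCommGroup E] [InnerProductSpace ℂ E] [CompleteSpace E]
    [NormedAddCommGroup Es] [InnerProductSpace ℂ Es] [CompleteSpace Es]
    (M : StrausSetting H E Es) (mu : ℂ)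
    (Rmu : H →L[ℂ] H) (hmu_mem : ∀ h : H, Rmu h ∈ M.A.adjoint.domain)
    (hmu_right : ∀ h : H, M.A.adjoint ⟨Rmu h, hmu_mem h⟩ - mu • Rmu h = h)
    (hmu_left : ∀ v : M.A.adjoint.domain, Rmu (M.A.adjoint v - mu • (v : H)) = (v : H))
    (u : M.A.domain) :
    ‖M.Γs ⟨Rmu (M.A u - mu • (u : H)), hmu_mem _⟩‖
      ≤ (1 + 16 * Real.sqrt ((|mu.im| * ‖Rmu‖) * (1 + |mu.im| * ‖Rmu‖))) * ‖M.Γ u‖ := by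
  set γ : ℝ := |mu.im| * ‖Rmu‖ with hγdef
  set g : ℝ := Real.sqrt (γ * (1 + γ)) with hgdef
  have hγ0 : 0 ≤ γ := mul_nonneg (abs_nonneg _) (norm_nonneg _)
  have hg0 : 0 ≤ g := Real.sqrt_nonneg _
  set v' : M.A.adjoint.domain := ⟨Rmu (M.A u - mu • (u : H)), hmu_mem _⟩ with hv'def
  set P : ℝ := ‖M.Γ u‖ with hPdef
  have hP0 : 0 ≤ P := norm_nonneg _
  have hveq : M.A.adjoint v' = mu • (v' : H) + (M.A u - mu • (u : H)) :=
    (eq_add_of_sub_eq (hmu_right (M.A u - mu • (u : H)))).trans (add_comm _ _)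
  have hkey := straus_key M mu u v' hveq
  clear_value v'
  clear_value γ g P
  rcases le_or_gt 0 mu.im with hb | hb
  · -- upper half plane (or real): contraction
    have hQ2 : ‖M.Γs v'‖ ^ 2 ≤ P ^ 2 := by
      nlinarith [hkey, sq_nonneg ‖(u : H) - (v' : H)‖,
        mul_nonneg hb (sq_nonneg ‖(u : H) - (v' : H)‖)]
    have hQP : ‖M.Γs v'‖ ≤ P := by
      nlinarith [norm_nonneg (M.Γs v'), hP0, hQ2]
    nlinarith [hQP, hg0, hP0]
  · -- lower half plane
    rcases (norm_nonneg Rmu).eq_or_lt' with hr | hr0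
    · -- Rmu = 0 : trivial
      have hR0 : Rmu = 0 := norm_eq_zero.mp hr
      have hz : v' = 0 := by
        apply Subtype.ext
        simp [hv'def, hR0]
      rw [hz, map_zero, norm_zero]
      positivity
    · have hγpos : 0 < γ := by
        rw [hγdef]; exact mul_pos (abs_pos.mpr (ne_of_lt hb)) hr0
      have hgpos : 0 < g := by
        rw [hgdef]; exact Real.sqrt_pos.mpr (by positivity)
      have hg2 : g ^ 2 = γ * (1 + γ) := by
        rw [hgdef]; exact Real.sq_sqrt (by positivity)
      have hγg : γ ≤ g := by nlinarith [hg2, hγ0, hg0]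
      have hgle : g ≤ 1 + γ := by nlinarith [hg2, hγ0, hg0]
      set r : ℝ := ‖Rmu‖ with hrdef
      set s : ℝ := g / r with hsdef
      have hs0 : 0 < s := div_pos hgpos hr0
      have hsr : s * r = g := div_mul_cancel₀ _ (ne_of_gt hr0)
      clear_value s r
      have hγeq : γ = -mu.im * r := by rw [hγdef, abs_of_neg hb]
      set lam : ℂ := (mu.re : ℂ) + (s : ℝ) * Complex.I with hlamdef
      have hlim : lam.im = s := by simp [hlamdef]
      have hlim0 : 0 < lam.im := by rw [hlim]; exact hs0
      set v₁' : M.A.adjoint.domain :=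
        ⟨M.Rs lam (M.A u - lam • (u : H)), M.Rs_mem lam hlim0 _⟩ with hv₁def
      have hv1eq : M.A.adjoint v₁' = lam • (v₁' : H) + (M.A u - lam • (u : H)) :=
        (eq_add_of_sub_eq (M.Rs_right lam hlim0 (M.A u - lam • (u : H)))).trans (add_comm _ _)
      have hkey1 := straus_key M lam u v₁' hv1eq
      rw [hlim] at hkey1
      clear_value v₁'
      set D₁ : ℝ := ‖(u : H) - (v₁' : H)‖ with hD₁def
      set D : ℝ := ‖(u : H) - (v' : H)‖ with hDdef
      have hD₁0 : 0 ≤ D₁ := by rw [hD₁def]; exact norm_nonneg _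
      have hD0 : 0 ≤ D := by rw [hDdef]; exact norm_nonneg _
      clear_value D D₁
      have hA : 2 * s * D₁ ^ 2 ≤ P ^ 2 := by
        rw [hPdef]; nlinarith [sq_nonneg ‖M.Γs v₁'‖, hkey1]
      -- comparison of v' and v₁'
      have harg : M.A.adjoint (v₁' - v') - mu • ((v₁' - v' : M.A.adjoint.domain) : H)
          = (mu - lam) • ((u : H) - (v₁' : H)) := by
        rw [LinearPMap.map_sub, AddSubgroupClass.coe_sub, hv1eq, hveq]
        module
      have hdiff : (v₁' : H) - (v' : H) = (mu - lam) • Rmu ((u : H) - (v₁' : H)) := by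
        have h := hmu_left (v₁' - v')
        rw [harg, map_smul, AddSubgroupClass.coe_sub] at h
        exact h.symm
      have hmulam : mu - lam = ((mu.im - s : ℝ) : ℂ) * Complex.I := by
        apply Complex.ext <;> simp [hlamdef]
      have hnl : ‖mu - lam‖ = s - mu.im := by
        rw [hmulam]
        simp only [norm_mul, Complex.norm_I, mul_one, Complex.norm_real, Real.norm_eq_abs]
        rw [abs_of_neg (by linarith)]
        ring
      have hnormdiff : ‖(v₁' : H) - (v' : H)‖ ≤ (s - mu.im) * (r * D₁) := by
        rw [hdiff, norm_smul, hnl]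
        have h1 : ‖Rmu ((u : H) - (v₁' : H))‖ ≤ r * D₁ := by
          rw [hrdef, hD₁def]; exact Rmu.le_opNorm _
        exact mul_le_mul_of_nonneg_left h1 (by linarith)
      have hBD : D ≤ (1 + g + γ) * D₁ := by
        have htri : D ≤ D₁ + ‖(v₁' : H) - (v' : H)‖ := by
          rw [hDdef, hD₁def]
          calc ‖(u : H) - (v' : H)‖
              = ‖((u : H) - (v₁' : H)) + ((v₁' : H) - (v' : H))‖ := by rw [sub_add_sub_cancel]
            _ ≤ ‖(u : H) - (v₁' : H)‖ + ‖(v₁' : H) - (v' : H)‖ := norm_add_le _ _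
        have hexp : (s - mu.im) * r = g + γ := by
          rw [sub_mul, hsr, hγeq]; ring
        nlinarith [htri, hnormdiff, hexp, hD₁0]
      -- final arithmetic
      have hbg : (-mu.im) * g = γ * s := by rw [hγeq, ← hsr]; ring
      have hkey' : ‖M.Γs v'‖ ^ 2 = P ^ 2 - 2 * mu.im * D ^ 2 := by
        rw [hPdef]; linarith [hkey]
      exact straus_arith γ g s mu.im P D D₁ ‖M.Γs v'‖ hγpos hgpos hb hs0 hg2 hbg
        hP0 (norm_nonneg _) hD0 hD₁0 hA hBD hkey'

end
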